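/- Let R be a commutative ring of prime characteristic p, and let W be a module over the skew polynomial ring R{F} (i.e., an R-module equipped with an additive map F : W → W satisfying F(ru) = r^p F(u) for all r ∈ R, u ∈ W). If F acts injectively on W, then for every F-stable R-submodule V of W (i.e., F(V) ⊆ V), the annihilator Ann_R(V) is a radical ideal of R. -/

import Mathlib

/-- If `F` is a Frobenius-semilinear endomorphism of an `R`-module `W` (over a commutative
ring `R` of prime characteristic `p`) which acts injectively, then the annihilator of every
`F`-stable submodule `V` of `W` is a radical ideal of `R`. -/
theorem stmt0 (R : Type) [CommRing R] (p : ℕ) (hp : p.Prime) [CharP R p]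
    (W : Type) [AddCommGroup W] [Module R W] (F : W →+ W)
    (hF : ∀ (r : R) (u : W), F (r • u) = r ^ p • F u)
    (hinj : Function.Injective F)
    (V : Submodule R W) (hV : ∀ v ∈ V, F v ∈ V) :
    V.annihilator.IsRadical := by
  have key : ∀ (k : ℕ) (r : R) (u : W), F^[k] (r • u) = r ^ (p ^ k) • F^[k] u := by
    intro k
    induction k with
    | zero => intro r u; simp
    | succ k ih =>
      intro r u
      rw [Function.iterate_succ_apply, hF, ih, ← pow_mul,
        show p * p ^ k = p ^ (k + 1) by ring, Function.iterate_succ_apply]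
  have stab : ∀ (k : ℕ) (v : W), v ∈ V → F^[k] v ∈ V := by
    intro k
    induction k with
    | zero => intro v hv; simpa using hv
    | succ k ih => intro v hv; rw [Function.iterate_succ_apply]; exact ih _ (hV v hv)
  intro r hr
  rw [Ideal.mem_radical_iff] at hr
  obtain ⟨n, hn⟩ := hr
  rw [Submodule.mem_annihilator] at hn ⊢
  intro v hv
  have hle : n ≤ p ^ n := Nat.le_of_lt (Nat.lt_pow_self hp.one_lt)
  have hFinj : Function.Injective (F^[n]) := Function.Injective.iterate hinj n
  apply hFinj
  rw [key]; simp only [map_zero, Function.iterate_fixed (map_zero F)]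
  have : r ^ (p ^ n) = r ^ (p ^ n - n) * r ^ n := by
    rw [← pow_add, Nat.sub_add_cancel hle]
  rw [this, mul_smul, hn _ (stab n v hv), smul_zero]
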